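/- Let U, V_1, V_2, V_3, … be independent random variables, each uniformly distributed on (0,1). Let N be the smallest integer n ≥ 2 such that U lies strictly between V_n and V_j for some 1 ≤ j < n (equivalently, such that V_n and V_1 lie on opposite sides of U). Then N is almost surely finite and P(N = n) = 2/(n(n+1)) for every n ≥ 2. -/

import Mathlib

open MeasureTheory ProbabilityTheory Set

def side (b : Bool) (u : ℝ) : Set ℝ := if b then Set.Iio u else Set.Ioi u

noncomputable def sval (b : Bool) (u : ℝ) : ℝ := if b then u else 1 - u

lemma side_measurableSet (b : Bool) (u : ℝ) : MeasurableSet (side b u) := by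
  cases b <;> simp [side]

lemma sval_nonneg {b : Bool} {u : ℝ} (hu : u ∈ Set.Ioo (0:ℝ) 1) : 0 ≤ sval b u := by
  cases b <;> simp [sval] <;> linarith [hu.1, hu.2]

lemma restrict_side {b : Bool} {u : ℝ} (hu : u ∈ Set.Ioo (0:ℝ) 1) :
    volume.restrict (Set.Ioo (0:ℝ) 1) (side b u) = ENNReal.ofReal (sval b u) := by
  obtain ⟨h0, h1⟩ := hu
  rw [Measure.restrict_apply (side_measurableSet b u)]
  cases b
  · have : side false u ∩ Set.Ioo (0:ℝ) 1 = Set.Ioo u 1 := by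
      ext x; simp only [side, Set.mem_inter_iff, Set.mem_Ioi, Set.mem_Ioo]
      constructor
      · rintro ⟨hx, _, hx1⟩; exact ⟨hx, hx1⟩
      · rintro ⟨hx, hx1⟩; exact ⟨hx, lt_trans h0 hx, hx1⟩
    rw [this, Real.volume_Ioo]; simp [sval]
  · have : side true u ∩ Set.Ioo (0:ℝ) 1 = Set.Ioo 0 u := by
      ext x; simp only [side, Set.mem_inter_iff, Set.mem_Iio, Set.mem_Ioo]
      constructor
      · rintro ⟨hx, hx0, _⟩; exact ⟨hx0, hx⟩
      · rintro ⟨hx0, hx⟩; exact ⟨hx, hx0, lt_trans hx h1⟩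
    rw [this, Real.volume_Ioo]; simp [sval]

lemma integral_key {n : ℕ} (hn : 2 ≤ n) (b : Bool) :
    ∫ u in Set.Ioo (0:ℝ) 1, sval b u ^ (n - 1) * sval (!b) u
      = 1 / (n * (n + 1)) := by
  have h1n : 1 ≤ n := le_trans one_le_two hn
  have hne : (n : ℝ) ≠ 0 := Nat.cast_ne_zero.mpr (by omega)
  have key : ∫ u in (0:ℝ)..1, u ^ (n-1) * (1 - u) = 1 / (n * (n+1)) := by
    have h : ∀ u : ℝ, u ^ (n-1) * (1 - u) = u ^ (n-1) - u ^ n := fun u => by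
      rw [mul_one_sub, ← pow_succ, Nat.sub_add_cancel h1n]
    simp_rw [h]
    rw [intervalIntegral.integral_sub (intervalIntegral.intervalIntegrable_pow _) (intervalIntegral.intervalIntegrable_pow _),
      integral_pow, integral_pow]
    rw [one_pow, one_pow, zero_pow (by omega), zero_pow (by omega)]
    rw [Nat.cast_sub h1n]
    push_cast
    field_simp
    rw [sub_add_cancel]
    field_simp
    ring
  have hIoo : ∀ f : ℝ → ℝ, ∫ u in Set.Ioo (0:ℝ) 1, f u = ∫ u in (0:ℝ)..1, f u := by
    intro f
    rw [intervalIntegral.integral_of_le zero_le_one, integral_Ioc_eq_integral_Ioo]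
  rw [hIoo]
  cases b
  · have : ∀ u : ℝ, sval false u ^ (n-1) * sval (!false) u
        = (fun x : ℝ => x ^ (n-1) * (1 - x)) (1 - u) := by
      intro u; simp [sval]
    simp_rw [this]
    rw [intervalIntegral.integral_comp_sub_left (fun x : ℝ => x ^ (n-1) * (1 - x)) 1]
    norm_num [key]
  · simpa [sval] using key

lemma continuous_sval (b : Bool) : Continuous (sval b) := by
  cases b
  · exact continuous_const.sub continuous_id
  · exact continuous_id

lemma meas_slice {ι : Type*} (i : ι) (c : Bool) :
    MeasurableSet {p : ℝ × (ι → ℝ) | p.2 i ∈ side c p.1} := by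
  cases c
  · simp only [side, Bool.false_eq_true, if_false, Set.mem_Ioi]
    exact measurableSet_lt measurable_fst measurable_snd.eval
  · simp only [side, if_true, Set.mem_Iio]
    exact measurableSet_lt measurable_snd.eval measurable_fst

lemma keyProb {Ω : Type*} [MeasurableSpace Ω] (P : Measure Ω) [IsProbabilityMeasure P]
    (X : ℕ → Ω → ℝ) (hmeas : ∀ i, Measurable (X i))
    (hindep : iIndepFun X P)
    (hunif : ∀ i, Measure.map (X i) P = volume.restrict (Set.Ioo (0 : ℝ) 1))
    {n : ℕ} (hn : 2 ≤ n) (b : Bool) :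
    P {ω | ∀ i ∈ Finset.Icc 1 n, X i ω ∈ side (if i = n then !b else b) (X 0 ω)}
      = ENNReal.ofReal (1 / (n * (n + 1))) := by
  classical
  set T : Finset ℕ := Finset.Icc 1 n with hT
  set Y : Ω → (T → ℝ) := fun ω i => X i ω with hYdef
  have hY : Measurable Y := measurable_pi_lambda _ fun i => hmeas i
  have hd : Disjoint ({0} : Finset ℕ) T := by
    simp [hT, Finset.disjoint_singleton_left]
  have h0T : (0 : ℕ) ∈ ({0} : Finset ℕ) := Finset.mem_singleton_self 0
  have h1 := hindep.indepFun_finset {0} T hd hmeas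
  have hXY : IndepFun (X 0) Y P :=
    h1.comp (measurable_pi_apply (⟨0, h0T⟩ : ({0} : Finset ℕ))) measurable_id
  have hmap : P.map (fun ω => (X 0 ω, Y ω)) = (P.map (X 0)).prod (P.map Y) :=
    (indepFun_iff_map_prod_eq_prod_map_map (hmeas 0).aemeasurable hY.aemeasurable).mp hXY
  set C : Set (ℝ × (T → ℝ)) :=
    {p | ∀ i : T, p.2 i ∈ side (if (i : ℕ) = n then !b else b) p.1} with hCdef
  have hC : MeasurableSet C := by
    have : C = ⋂ i : T, {p : ℝ × (T → ℝ) | p.2 i ∈ side (if (i : ℕ) = n then !b else b) p.1} := by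
      ext p; simp [hCdef, Set.mem_iInter]
    rw [this]
    exact MeasurableSet.iInter fun i => meas_slice i _
  have hpre : {ω | ∀ i ∈ Finset.Icc 1 n, X i ω ∈ side (if i = n then !b else b) (X 0 ω)}
      = (fun ω => (X 0 ω, Y ω)) ⁻¹' C := by
    ext ω
    simp only [Set.mem_setOf_eq, Set.mem_preimage, hCdef, hYdef]
    constructor
    · rintro h ⟨i, hi⟩; exact h i hi
    · intro h i hi; exact h ⟨i, hi⟩
  have hslice : ∀ u : ℝ, (P.map Y) (Prod.mk u ⁻¹' C)
      = ∏ i ∈ T, volume.restrict (Set.Ioo (0:ℝ) 1) (side (if i = n then !b else b) u) := by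
    intro u
    have hsm : MeasurableSet (Prod.mk u ⁻¹' C) := hC.preimage measurable_prodMk_left
    rw [Measure.map_apply hY hsm]
    have heq : Y ⁻¹' (Prod.mk u ⁻¹' C)
        = ⋂ i ∈ T, X i ⁻¹' side (if i = n then !b else b) u := by
      ext ω
      simp only [Set.mem_preimage, hCdef, Set.mem_setOf_eq, hYdef, Set.mem_iInter]
      constructor
      · intro h i hi; exact h ⟨i, hi⟩
      · rintro h ⟨i, hi⟩; exact h i hi
    rw [heq, hindep.meas_biInter fun i _ => ⟨side (if i = n then !b else b) u,
      side_measurableSet _ _, rfl⟩]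
    refine Finset.prod_congr rfl fun i _ => ?_
    rw [← Measure.map_apply (hmeas i) (side_measurableSet _ _), hunif i]
  have hprod : ∀ u ∈ Set.Ioo (0:ℝ) 1,
      ∏ i ∈ T, volume.restrict (Set.Ioo (0:ℝ) 1) (side (if i = n then !b else b) u)
        = ENNReal.ofReal (sval b u ^ (n - 1) * sval (!b) u) := by
    intro u hu
    have hnT : n ∈ T := Finset.mem_Icc.mpr ⟨by omega, le_refl n⟩
    rw [← Finset.mul_prod_erase T _ hnT]
    have h1' : ∀ i ∈ T.erase n, volume.restrict (Set.Ioo (0:ℝ) 1)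
        (side (if i = n then !b else b) u) = ENNReal.ofReal (sval b u) := fun i hi => by
      rw [if_neg (Finset.ne_of_mem_erase hi), restrict_side hu]
    rw [Finset.prod_congr rfl h1', Finset.prod_const]
    have hcard : (T.erase n).card = n - 1 := by
      rw [Finset.card_erase_of_mem hnT, hT, Nat.card_Icc]; omega
    rw [if_pos rfl, restrict_side hu, hcard, ← ENNReal.ofReal_pow (sval_nonneg hu),
      ← ENNReal.ofReal_mul (sval_nonneg hu)]
    rw [mul_comm]
  rw [hpre, ← Measure.map_apply ((hmeas 0).prodMk hY) hC, hmap, Measure.prod_apply hC, hunif 0]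
  have hae : (fun u => (P.map Y) (Prod.mk u ⁻¹' C))
      =ᵐ[volume.restrict (Set.Ioo (0:ℝ) 1)]
      fun u => ENNReal.ofReal (sval b u ^ (n - 1) * sval (!b) u) := by
    rw [Filter.EventuallyEq, ae_restrict_iff' measurableSet_Ioo]
    exact Filter.Eventually.of_forall fun u hu => by rw [hslice u, hprod u hu]
  rw [lintegral_congr_ae hae]
  have hint : IntegrableOn (fun u => sval b u ^ (n - 1) * sval (!b) u) (Set.Ioo (0:ℝ) 1) := by
    apply (Continuous.integrableOn_Icc (by
      exact ((continuous_sval b).pow _).mul (continuous_sval (!b)))).mono_set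
      (Set.Ioo_subset_Icc_self)
  have hnn : 0 ≤ᵐ[volume.restrict (Set.Ioo (0:ℝ) 1)]
      fun u => sval b u ^ (n - 1) * sval (!b) u := by
    rw [Filter.EventuallyLE, ae_restrict_iff' measurableSet_Ioo]
    exact Filter.Eventually.of_forall fun u hu =>
      mul_nonneg (pow_nonneg (sval_nonneg hu) _) (sval_nonneg hu)
  rw [← ofReal_integral_eq_lintegral_ofReal hint hnn, integral_key hn b]

lemma mem_side_true {u x : ℝ} : x ∈ side true u ↔ x < u := by simp [side]

lemma mem_side_false {u x : ℝ} : x ∈ side false u ↔ u < x := by simp [side]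

lemma side_opp {b : Bool} {u x y : ℝ} (hx : x ∈ side b u) (hy : y ∈ side (!b) u) :
    (x < u ∧ u < y) ∨ (y < u ∧ u < x) := by
  cases b
  · exact Or.inr ⟨mem_side_true.mp hy, mem_side_false.mp hx⟩
  · exact Or.inl ⟨mem_side_true.mp hx, mem_side_false.mp hy⟩

lemma side_same {b : Bool} {u x y : ℝ} (hx : x ∈ side b u) (hy : y ∈ side b u) :
    ¬((x < u ∧ u < y) ∨ (y < u ∧ u < x)) := by
  cases b
  · rw [mem_side_false] at hx hy
    rintro (⟨h1, h2⟩ | ⟨h1, h2⟩) <;> linarith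
  · rw [mem_side_true] at hx hy
    rintro (⟨h1, h2⟩ | ⟨h1, h2⟩) <;> linarith

lemma measA {Ω : Type*} [MeasurableSpace Ω] (X : ℕ → Ω → ℝ) (hmeas : ∀ i, Measurable (X i))
    (n : ℕ) (b : Bool) :
    MeasurableSet {ω | ∀ i ∈ Finset.Icc 1 n, X i ω ∈ side (if i = n then !b else b) (X 0 ω)} := by
  have : {ω | ∀ i ∈ Finset.Icc 1 n, X i ω ∈ side (if i = n then !b else b) (X 0 ω)}
      = ⋂ i ∈ Finset.Icc 1 n, {ω | X i ω ∈ side (if i = n then !b else b) (X 0 ω)} := by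
    ext ω; simp [Set.mem_iInter]
  rw [this]
  refine (Finset.Icc 1 n).measurableSet_biInter fun i _ => ?_
  cases h : (if i = n then !b else b)
  · have : {ω | X i ω ∈ side false (X 0 ω)} = {ω | X 0 ω < X i ω} := by
      ext ω; exact mem_side_false
    rw [this]; exact measurableSet_lt (hmeas 0) (hmeas i)
  · have : {ω | X i ω ∈ side true (X 0 ω)} = {ω | X i ω < X 0 ω} := by
      ext ω; exact mem_side_true
    rw [this]; exact measurableSet_lt (hmeas i) (hmeas 0)

lemma ties_null {Ω : Type*} [MeasurableSpace Ω] (P : Measure Ω) [IsProbabilityMeasure P]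
    (X : ℕ → Ω → ℝ) (hmeas : ∀ i, Measurable (X i))
    (hindep : iIndepFun X P)
    (hunif : ∀ i, Measure.map (X i) P = volume.restrict (Set.Ioo (0 : ℝ) 1))
    {i k : ℕ} (hik : i ≠ k) : P {ω | X i ω = X k ω} = 0 := by
  have hind : IndepFun (X i) (X k) P := hindep.indepFun hik
  have hmap : P.map (fun ω => (X i ω, X k ω)) = (P.map (X i)).prod (P.map (X k)) :=
    (indepFun_iff_map_prod_eq_prod_map_map (hmeas i).aemeasurable
      (hmeas k).aemeasurable).mp hind
  have hD : MeasurableSet {p : ℝ × ℝ | p.1 = p.2} :=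
    measurableSet_eq_fun measurable_fst measurable_snd
  have hpre : {ω | X i ω = X k ω} = (fun ω => (X i ω, X k ω)) ⁻¹' {p : ℝ × ℝ | p.1 = p.2} := rfl
  rw [hpre, ← Measure.map_apply ((hmeas i).prodMk (hmeas k)) hD, hmap, Measure.prod_apply hD]
  have hz : ∀ x : ℝ, (P.map (X k)) (Prod.mk x ⁻¹' {p : ℝ × ℝ | p.1 = p.2}) = 0 := by
    intro x
    have hs : Prod.mk x ⁻¹' {p : ℝ × ℝ | p.1 = p.2} = {x} := by
      ext y; simp [eq_comm]
    rw [hs, hunif k, Measure.restrict_apply (measurableSet_singleton x)]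
    refine le_antisymm (le_trans (measure_mono Set.inter_subset_left) ?_) zero_le
    simp
  simp only [hz, lintegral_zero]

lemma tsum_telescope :
    ∑' k : ℕ, ENNReal.ofReal (2 / (((k : ℝ) + 2) * ((k : ℝ) + 3))) = 1 := by
  have hnn : ∀ k : ℕ, 0 ≤ 2 / (((k : ℝ) + 2) * ((k : ℝ) + 3)) := fun k => by positivity
  have hsum : HasSum (fun k : ℕ => 2 / (((k : ℝ) + 2) * ((k : ℝ) + 3))) 1 := by
    rw [hasSum_iff_tendsto_nat_of_nonneg hnn]
    have hps : ∀ m : ℕ, ∑ k ∈ Finset.range m, 2 / (((k : ℝ) + 2) * ((k : ℝ) + 3))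
        = 1 - 2 / ((m : ℝ) + 2) := by
      intro m
      have h := Finset.sum_range_sub' (f := fun k : ℕ => 2 / ((k : ℝ) + 2)) m
      have heq : ∀ k ∈ Finset.range m, 2 / (((k : ℝ) + 2) * ((k : ℝ) + 3))
          = 2 / ((k : ℝ) + 2) - 2 / (((k : ℕ) + 1 : ℕ) + 2) := by
        intro k _
        push_cast
        have h2 : ((k : ℝ) + 2) ≠ 0 := by positivity
        have h3 : ((k : ℝ) + 3) ≠ 0 := by positivity
        field_simp
        ring
      rw [Finset.sum_congr rfl heq, h]
      norm_num
    simp_rw [hps]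
    have h0 : Filter.Tendsto (fun m : ℕ => 2 / ((m : ℝ) + 2)) Filter.atTop (nhds 0) :=
      Filter.Tendsto.div_atTop tendsto_const_nhds
        (Filter.tendsto_atTop_add_const_right _ 2 tendsto_natCast_atTop_atTop)
    simpa using tendsto_const_nhds.sub h0
  rw [← ENNReal.ofReal_tsum_of_nonneg hnn hsum.summable, hsum.tsum_eq, ENNReal.ofReal_one]

/-- Theorem 2.1(2): with `U = X 0` and `V_i = X i` (`i ≥ 1`) i.i.d. uniform on `(0,1)`,
the smallest `n ≥ 2` such that `U` lies strictly between `V_n` and `V_j` for some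
`1 ≤ j < n` is almost surely finite and satisfies `P(N = n) = 2/(n(n+1))` for `n ≥ 2`. -/
theorem stmt_6 {Ω : Type*} [MeasurableSpace Ω] (P : Measure Ω) [IsProbabilityMeasure P]
    (X : ℕ → Ω → ℝ) (hmeas : ∀ i, Measurable (X i))
    (hindep : iIndepFun X P)
    (hunif : ∀ i, Measure.map (X i) P = volume.restrict (Set.Ioo (0 : ℝ) 1))
    (S : Ω → Set ℕ)
    (hS : ∀ ω, S ω = {n | 2 ≤ n ∧ ∃ j, 1 ≤ j ∧ j < n ∧
      ((X j ω < X 0 ω ∧ X 0 ω < X n ω) ∨ (X n ω < X 0 ω ∧ X 0 ω < X j ω))})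
    (N : Ω → ℕ) (hN : ∀ ω, N ω = sInf (S ω)) :
    P {ω | (S ω).Nonempty} = 1 ∧
      ∀ n : ℕ, 2 ≤ n → P {ω | N ω = n} = ENNReal.ofReal (2 / (n * (n + 1))) := by
  classical
  set A : ℕ → Bool → Set Ω := fun n b =>
    {ω | ∀ i ∈ Finset.Icc 1 n, X i ω ∈ side (if i = n then !b else b) (X 0 ω)} with hAdef
  have hAmeas : ∀ n b, MeasurableSet (A n b) := fun n b => measA X hmeas n b
  have hAprob : ∀ n : ℕ, 2 ≤ n → ∀ b, P (A n b) = ENNReal.ofReal (1 / (n * (n + 1))) :=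
    fun n hn b => keyProb P X hmeas hindep hunif hn b
  -- (I) : A n b ⊆ {N = n}
  have hsubI : ∀ n : ℕ, 2 ≤ n → ∀ b, ∀ ω ∈ A n b, N ω = n := by
    intro n hn b ω hω
    have hb : ∀ i, 1 ≤ i → i < n → X i ω ∈ side b (X 0 ω) := by
      intro i h1 h2
      have := hω i (Finset.mem_Icc.mpr ⟨h1, le_of_lt h2⟩)
      rwa [if_neg (Nat.ne_of_lt h2)] at this
    have hlast : X n ω ∈ side (!b) (X 0 ω) := by
      have := hω n (Finset.mem_Icc.mpr ⟨by omega, le_refl n⟩)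
      rwa [if_pos rfl] at this
    have hnS : n ∈ S ω := by
      rw [hS]
      exact ⟨hn, 1, le_refl 1, by omega, side_opp (hb 1 (le_refl 1) (by omega)) hlast⟩
    have hnotm : ∀ m, m < n → m ∉ S ω := by
      intro m hm hmS
      rw [hS] at hmS
      obtain ⟨hm2, j, hj1, hjm, hor⟩ := hmS
      exact side_same (hb j hj1 (by omega)) (hb m (by omega) hm) hor
    have hne : (S ω).Nonempty := ⟨n, hnS⟩
    have hmem := Nat.sInf_mem hne
    rw [hN]
    rcases lt_trichotomy (sInf (S ω)) n with h | h | h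
    · exact absurd hmem (hnotm _ h)
    · exact h
    · exact absurd (Nat.sInf_le hnS) (not_le.mpr h)
  -- (II) : {N = n} minus ties ⊆ A n true ∪ A n false
  have hsupII : ∀ n : ℕ, 2 ≤ n → ∀ ω, N ω = n → (∀ i k : ℕ, i ≠ k → X i ω ≠ X k ω) →
      ω ∈ A n true ∪ A n false := by
    intro n hn ω hNn hties
    rw [hN] at hNn
    have hne : (S ω).Nonempty := by
      by_contra hc
      rw [Set.not_nonempty_iff_eq_empty] at hc
      rw [hc, Nat.sInf_empty] at hNn
      omega
    have hnS : n ∈ S ω := hNn ▸ Nat.sInf_mem hne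
    have hnotm : ∀ m, m < n → m ∉ S ω := fun m hm c =>
      absurd (Nat.sInf_le c) (by omega)
    rw [hS] at hnS
    obtain ⟨-, j, hj1, hjn, hor⟩ := hnS
    have hsame : ∀ a c : ℕ, 1 ≤ a → a < n → 1 ≤ c → c < n →
        X a ω < X 0 ω → X c ω < X 0 ω := by
      intro a c ha han hc hcn hXa
      by_contra h
      have hXc : X 0 ω < X c ω :=
        lt_of_le_of_ne (not_lt.mp h) (fun e => hties 0 c (by omega) e)
      have hac : a ≠ c := fun e => by rw [e] at hXa; linarith
      rcases Nat.lt_or_ge a c with hlt | hge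
      · refine hnotm c hcn ?_
        rw [hS]
        exact ⟨by omega, a, ha, hlt, Or.inl ⟨hXa, hXc⟩⟩
      · have hlt : c < a := by omega
        refine hnotm a han ?_
        rw [hS]
        exact ⟨by omega, c, hc, hlt, Or.inr ⟨hXa, hXc⟩⟩
    have hsame' : ∀ a c : ℕ, 1 ≤ a → a < n → 1 ≤ c → c < n →
        X 0 ω < X a ω → X 0 ω < X c ω := by
      intro a c ha han hc hcn hXa
      by_contra h
      have hXc : X c ω < X 0 ω :=
        lt_of_le_of_ne (not_lt.mp h) (fun e => hties c 0 (by omega) e)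
      exact absurd (hsame c a hc hcn ha han hXc) (by linarith)
    rcases hor with ⟨hj0, h0n⟩ | ⟨hn0, h0j⟩
    · left
      intro i hi
      rw [Finset.mem_Icc] at hi
      by_cases hin : i = n
      · rw [if_pos hin, hin]
        exact mem_side_false.mpr h0n
      · rw [if_neg hin]
        exact mem_side_true.mpr (hsame j i hj1 hjn hi.1 (by omega) hj0)
    · right
      intro i hi
      rw [Finset.mem_Icc] at hi
      by_cases hin : i = n
      · rw [if_pos hin, hin]
        exact mem_side_true.mpr hn0
      · rw [if_neg hin]
        exact mem_side_false.mpr (hsame' j i hj1 hjn hi.1 (by omega) h0j)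
  -- disjointness of the two sides
  have hdisj : ∀ n : ℕ, 2 ≤ n → Disjoint (A n true) (A n false) := by
    intro n hn
    rw [Set.disjoint_left]
    intro ω h1 h2
    have ha := h1 1 (Finset.mem_Icc.mpr ⟨le_refl 1, by omega⟩)
    have hb := h2 1 (Finset.mem_Icc.mpr ⟨le_refl 1, by omega⟩)
    rw [if_neg (by omega : (1:ℕ) ≠ n)] at ha hb
    exact absurd (mem_side_true.mp ha) (not_lt.mpr (le_of_lt (mem_side_false.mp hb)))
  have hPunion : ∀ n : ℕ, 2 ≤ n →
      P (A n true ∪ A n false) = ENNReal.ofReal (2 / (n * (n + 1))) := by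
    intro n hn
    rw [measure_union (hdisj n hn) (hAmeas n false), hAprob n hn true, hAprob n hn false,
      ← ENNReal.ofReal_add (by positivity) (by positivity)]
    congr 1
    rw [← add_div]
    norm_num
  -- part 2
  have part2 : ∀ n : ℕ, 2 ≤ n → P {ω | N ω = n} = ENNReal.ofReal (2 / (n * (n + 1))) := by
    intro n hn
    set Tset : Set Ω := ⋃ (i : ℕ), ⋃ (k : ℕ), ⋃ (_ : i ≠ k), {ω | X i ω = X k ω} with hTdef
    have hT0 : P Tset = 0 :=
      measure_iUnion_null fun i => measure_iUnion_null fun k =>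
        measure_iUnion_null fun hik => ties_null P X hmeas hindep hunif hik
    have hsub2 : {ω | N ω = n} ⊆ (A n true ∪ A n false) ∪ Tset := by
      intro ω hω
      by_cases ht : ∀ i k : ℕ, i ≠ k → X i ω ≠ X k ω
      · exact Or.inl (hsupII n hn ω hω ht)
      · push_neg at ht
        obtain ⟨i, k, hik, heq⟩ := ht
        exact Or.inr (Set.mem_iUnion.mpr ⟨i, Set.mem_iUnion.mpr ⟨k,
          Set.mem_iUnion.mpr ⟨hik, heq⟩⟩⟩)
    have hsub1 : A n true ∪ A n false ⊆ {ω | N ω = n} := by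
      rintro ω (h | h)
      · exact hsubI n hn true ω h
      · exact hsubI n hn false ω h
    refine le_antisymm ?_ ?_
    · calc P {ω | N ω = n} ≤ P ((A n true ∪ A n false) ∪ Tset) := measure_mono hsub2
        _ ≤ P (A n true ∪ A n false) + P Tset := measure_union_le _ _
        _ = ENNReal.ofReal (2 / (n * (n + 1))) := by rw [hT0, add_zero, hPunion n hn]
    · rw [← hPunion n hn]
      exact measure_mono hsub1
  refine ⟨?_, part2⟩
  -- part 1
  have hDsub : ∀ k : ℕ, A (k + 2) true ∪ A (k + 2) false ⊆ {ω | (S ω).Nonempty} := by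
    intro k ω hω
    have hNω : N ω = k + 2 := by
      rcases hω with h | h
      · exact hsubI (k + 2) (by omega) true ω h
      · exact hsubI (k + 2) (by omega) false ω h
    by_contra hc
    rw [Set.mem_setOf_eq, Set.not_nonempty_iff_eq_empty] at hc
    rw [hN, hc, Nat.sInf_empty] at hNω
    omega
  have hDdisj : Pairwise (Function.onFun Disjoint
      fun k : ℕ => A (k + 2) true ∪ A (k + 2) false) := by
    intro k l hkl
    rw [Function.onFun, Set.disjoint_left]
    intro ω h1 h2
    have e1 : N ω = k + 2 := by
      rcases h1 with h | h
      · exact hsubI (k + 2) (by omega) true ω h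
      · exact hsubI (k + 2) (by omega) false ω h
    have e2 : N ω = l + 2 := by
      rcases h2 with h | h
      · exact hsubI (l + 2) (by omega) true ω h
      · exact hsubI (l + 2) (by omega) false ω h
    omega
  have hPU : P (⋃ k : ℕ, (A (k + 2) true ∪ A (k + 2) false)) = 1 := by
    rw [measure_iUnion hDdisj fun k => (hAmeas _ true).union (hAmeas _ false)]
    have : ∀ k : ℕ, P (A (k + 2) true ∪ A (k + 2) false)
        = ENNReal.ofReal (2 / (((k : ℝ) + 2) * ((k : ℝ) + 3))) := by
      intro k
      rw [hPunion (k + 2) (by omega)]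
      congr 1
      push_cast
      ring_nf
    rw [tsum_congr this, tsum_telescope]
  refine le_antisymm prob_le_one ?_
  rw [← hPU]
  exact measure_mono (Set.iUnion_subset hDsub)
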